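/- arXiv:2409.05812 — 8 statements merged into one kernel-verified Lean document; each statement's English description precedes it below -/
import Mathlib

section
/- Let E, A ∈ ℝ^{m×n}, B ∈ ℝ^{m×k}, D ∈ ℝ^{m×q}, F ∈ ℝ^{m×l}, C ∈ ℝ^{r×n}, G ∈ ℝ^{r×q}, K ∈ ℝ^{p×n}, H ∈ ℝ^{l×p}, and let N ∈ ℝ^{p×p}, T ∈ ℝ^{p×m}, L ∈ ℝ^{p×r}, M ∈ ℝ^{p×r}. Let u : ℝ → ℝᵏ and v : ℝ → ℝ^q be functions, g : ℝˡ × ℝᵏ → ℝˡ a function, and let x : ℝ → ℝⁿ and w : ℝ → ℝᵖ be differentiable functions such that for every t ∈ ℝ: E·ẋ(t) = A·x(t) + B·u(t) + D·v(t) + F·g(H·K·x(t), u(t)), and, with y(t) := C·x(t) + G·v(t), z(t) := K·x(t), ẑ(t) := w(t) + M·y(t), one has ẇ(t) = N·w(t) + T·B·u(t) + L·y(t) + T·F·g(H·ẑ(t), u(t)). Define e₁(t) := T·E·x(t) − w(t) and e(t) := z(t) − ẑ(t). Then for every t ∈ ℝ: (i) e(t) = e₁(t) − (T·E + M·C − K)·x(t)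 − M·G·v(t), and (ii) e₁ is differentiable with ė₁(t) = N·e₁(t) + (T·D − L·G)·v(t) + (T·A − L·C − N·T·E)·x(t) + T·F·(g(H·K·x(t), u(t)) − g(H·ẑ(t), u(t))). -/
open Matrix

/-- Error dynamics of the functional filter: for the nonlinear descriptor plant
`E ẋ = A x + B u + D v + F g(HKx, u)`, `y = C x + G v`, `z = K x` and the filter
`ẇ = N w + T B u + L y + T F g(H ẑ, u)`, `ẑ = w + M y`, the errors
`e₁ = T E x − w` and `e = z − ẑ` satisfy
`e = e₁ − (TE + MC − K) x − M G v` and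
`ė₁ = N e₁ + (TD − LG) v + (TA − LC − NTE) x + TF (g(HKx,u) − g(Hẑ,u))`. -/
theorem filter_error_dynamics (m n k q l r p : ℕ)
    (E A : Matrix (Fin m) (Fin n) ℝ) (B : Matrix (Fin m) (Fin k) ℝ)
    (D : Matrix (Fin m) (Fin q) ℝ) (F : Matrix (Fin m) (Fin l) ℝ)
    (C : Matrix (Fin r) (Fin n) ℝ) (G : Matrix (Fin r) (Fin q) ℝ)
    (K : Matrix (Fin p) (Fin n) ℝ) (H : Matrix (Fin l) (Fin p) ℝ)
    (N : Matrix (Fin p) (Fin p) ℝ) (T : Matrix (Fin p) (Fin m) ℝ)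
    (L M : Matrix (Fin p) (Fin r) ℝ)
    (u : ℝ → Fin k → ℝ) (v : ℝ → Fin q → ℝ)
    (g : (Fin l → ℝ) → (Fin k → ℝ) → (Fin l → ℝ))
    (x : ℝ → Fin n → ℝ) (w : ℝ → Fin p → ℝ)
    (hx : Differentiable ℝ x) (hw : Differentiable ℝ w)
    (y : ℝ → Fin r → ℝ) (z : ℝ → Fin p → ℝ) (zhat : ℝ → Fin p → ℝ)
    (hy : ∀ t : ℝ, y t = C *ᵥ x t + G *ᵥ v t)
    (hz : ∀ t : ℝ, z t = K *ᵥ x t)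
    (hzhat : ∀ t : ℝ, zhat t = w t + M *ᵥ y t)
    (hplant : ∀ t : ℝ,
      E *ᵥ deriv x t =
        A *ᵥ x t + B *ᵥ u t + D *ᵥ v t + F *ᵥ g ((H * K) *ᵥ x t) (u t))
    (hfilter : ∀ t : ℝ,
      deriv w t =
        N *ᵥ w t + (T * B) *ᵥ u t + L *ᵥ y t + (T * F) *ᵥ g (H *ᵥ zhat t) (u t))
    (e₁ : ℝ → Fin p → ℝ) (e : ℝ → Fin p → ℝ)
    (he₁ : ∀ t : ℝ, e₁ t = (T * E) *ᵥ x t - w t)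
    (he : ∀ t : ℝ, e t = z t - zhat t) :
    ∀ t : ℝ,
      (e t = e₁ t - (T * E + M * C - K) *ᵥ x t - (M * G) *ᵥ v t) ∧
      HasDerivAt e₁
        (N *ᵥ e₁ t + (T * D - L * G) *ᵥ v t + (T * A - L * C - N * (T * E)) *ᵥ x t
          + (T * F) *ᵥ (g ((H * K) *ᵥ x t) (u t) - g (H *ᵥ zhat t) (u t))) t := by
  intro t
  constructor
  · simp only [he, hz, hzhat, he₁, hy, Matrix.add_mulVec, Matrix.sub_mulVec,
      Matrix.mulVec_add, ← Matrix.mulVec_mulVec]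
    abel
  · have h1 : HasDerivAt (fun s => (T * E) *ᵥ x s) ((T * E) *ᵥ deriv x t) t := by
      exact ((Matrix.mulVecLin (T * E)).toContinuousLinearMap.hasFDerivAt).comp_hasDerivAt t
        (hx t).hasDerivAt
    have h2 : HasDerivAt e₁ ((T * E) *ᵥ deriv x t - deriv w t) t := by
      have : e₁ = fun s => (T * E) *ᵥ x s - w s := funext he₁
      rw [this]
      exact h1.sub (hw t).hasDerivAt
    convert h2 using 1
    have hTE : (T * E) *ᵥ deriv x t = T *ᵥ (E *ᵥ deriv x t) := by
      rw [Matrix.mulVec_mulVec]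
    rw [hTE, hplant t, hfilter t]
    simp only [he₁, hy, hzhat, Matrix.add_mulVec, Matrix.sub_mulVec,
      Matrix.mulVec_add, Matrix.mulVec_sub, ← Matrix.mulVec_mulVec]
    abel
end

section
/- Let E, A ∈ ℝ^{m×n}, C ∈ ℝ^{r×n}, K ∈ ℝ^{p×n}. There exist matrices T ∈ ℝ^{p×m}, M ∈ ℝ^{p×r}, P ∈ ℝ^{p×r}, N ∈ ℝ^{p×p} satisfying T·E + M·C = K and T·A + P·C − N·K = 0 if and only if the rank of the block matrix with block rows [E A], [C 0], [0 C], [0 K], [K 0] (of size (m+2r+2p)×2n) equals the rank of the block matrix with block rows [E A], [C 0], [0 C], [0 K] (of size (m+2r+p)×2n). -/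
open Matrix Submodule Set FiniteDimensional

lemma aux_fromCols_add {m n₁ n₂ : Type*} (A₁ C₁ : Matrix m n₁ ℝ) (A₂ C₂ : Matrix m n₂ ℝ) :
    Matrix.fromCols A₁ A₂ + Matrix.fromCols C₁ C₂
      = Matrix.fromCols (A₁ + C₁) (A₂ + C₂) := by
  ext i j
  cases j <;> simp [Matrix.fromCols]

/-- Row span containment is equivalent to left factorization. -/
lemma aux_exists_factor_iff_span_le {q p s : Type*} [Fintype q] [Fintype p] [Fintype s]
    (B : Matrix q s ℝ) (K0 : Matrix p s ℝ) :
    (∃ X : Matrix p q ℝ, X * B = K0) ↔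
      Submodule.span ℝ (Set.range K0) ≤ Submodule.span ℝ (Set.range B) := by
  constructor
  · rintro ⟨X, rfl⟩
    rw [Submodule.span_le]
    rintro _ ⟨i, rfl⟩
    have h : (X * B) i = B.vecMulLinear (X i) := by
      ext j
      simp [Matrix.mul_apply, Matrix.vecMul, dotProduct]
    rw [h]
    change _ ∈ ((span ℝ (range B.row) : Submodule ℝ (s → ℝ)) : Set (s → ℝ))
    rw [← range_vecMulLinear]
    exact LinearMap.mem_range_self _ _
  · intro h
    have h' : ∀ i, K0 i ∈ LinearMap.range B.vecMulLinear := by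
      intro i
      rw [range_vecMulLinear]
      exact h (Submodule.subset_span ⟨i, rfl⟩)
    choose x hx using h'
    refine ⟨Matrix.of x, ?_⟩
    ext i j
    have := congr_fun (hx i) j
    simpa [Matrix.mul_apply, Matrix.vecMul, dotProduct] using this

lemma aux_rank_fromRows_eq_iff {q p s : Type*} [Fintype q] [Fintype p] [Fintype s]
    (B : Matrix q s ℝ) (K0 : Matrix p s ℝ) :
    (Matrix.fromRows B K0).rank = B.rank ↔ ∃ X : Matrix p q ℝ, X * B = K0 := by
  rw [Matrix.rank_eq_finrank_span_row, Matrix.rank_eq_finrank_span_row,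
    aux_exists_factor_iff_span_le]
  have hrange : Set.range (Matrix.fromRows B K0).row = Set.range B ∪ Set.range K0 :=
    Set.Sum.elim_range B K0
  rw [hrange, Submodule.span_union]
  constructor
  · intro h
    have heq := Submodule.eq_of_le_of_finrank_le
      (le_sup_left : Submodule.span ℝ (Set.range B) ≤ _) h.le
    exact le_sup_right.trans heq.ge
  · intro h
    rw [sup_eq_left.mpr h]
    rfl

/-- The linear matrix equations `T·E + M·C = K` and `T·A + P·C − N·K = 0` are solvable
for `(T, M, P, N)` if and only if the rank of the block matrix with block rows
`[E A], [C 0], [0 C], [0 K], [K 0]` equals the rank of the block matrix with block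
rows `[E A], [C 0], [0 C], [0 K]`. -/
theorem linear_filter_equations_solvable_iff_rank (m n r p : ℕ)
    (E A : Matrix (Fin m) (Fin n) ℝ) (C : Matrix (Fin r) (Fin n) ℝ)
    (K : Matrix (Fin p) (Fin n) ℝ) :
    (∃ (T : Matrix (Fin p) (Fin m) ℝ) (M : Matrix (Fin p) (Fin r) ℝ)
        (P : Matrix (Fin p) (Fin r) ℝ) (N : Matrix (Fin p) (Fin p) ℝ),
        T * E + M * C = K ∧ T * A + P * C - N * K = 0) ↔
      (Matrix.fromRows
          (Matrix.fromRows
            (Matrix.fromRows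
              (Matrix.fromRows (Matrix.fromCols E A) (Matrix.fromCols C 0))
              (Matrix.fromCols 0 C))
            (Matrix.fromCols 0 K))
          (Matrix.fromCols K 0)).rank =
        (Matrix.fromRows
          (Matrix.fromRows
            (Matrix.fromRows (Matrix.fromCols E A) (Matrix.fromCols C 0))
            (Matrix.fromCols 0 C))
          (Matrix.fromCols 0 K)).rank := by
  rw [aux_rank_fromRows_eq_iff]
  constructor
  · rintro ⟨T, M, P, N, h1, h2⟩
    refine ⟨Matrix.fromCols (Matrix.fromCols (Matrix.fromCols T M) P) (-N), ?_⟩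
    rw [Matrix.fromCols_mul_fromRows, Matrix.fromCols_mul_fromRows,
      Matrix.fromCols_mul_fromRows, Matrix.mul_fromCols, Matrix.mul_fromCols,
      Matrix.mul_fromCols, Matrix.mul_fromCols, aux_fromCols_add,
      aux_fromCols_add, aux_fromCols_add, Matrix.fromCols_ext_iff]
    constructor
    · simpa using h1
    · simp only [Matrix.mul_zero, zero_add, add_zero, neg_mul]
      rw [Matrix.neg_mul, ← sub_eq_add_neg]
      exact h2
  · rintro ⟨X, hX⟩
    set T := X.toCols₁.toCols₁.toCols₁ with hT
    set M := X.toCols₁.toCols₁.toCols₂ with hM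
    set P := X.toCols₁.toCols₂ with hP
    set N' := X.toCols₂ with hN
    have hXeq : X = Matrix.fromCols (Matrix.fromCols (Matrix.fromCols T M) P) N' := by
      rw [hT, hM, hP, hN, Matrix.fromCols_toCols, Matrix.fromCols_toCols,
        Matrix.fromCols_toCols]
    rw [hXeq, Matrix.fromCols_mul_fromRows, Matrix.fromCols_mul_fromRows,
      Matrix.fromCols_mul_fromRows, Matrix.mul_fromCols, Matrix.mul_fromCols,
      Matrix.mul_fromCols, Matrix.mul_fromCols, aux_fromCols_add,
      aux_fromCols_add, aux_fromCols_add, Matrix.fromCols_ext_iff] at hX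
    refine ⟨T, M, P, -N', ?_, ?_⟩
    · have := hX.1
      simpa using this
    · have := hX.2
      simp only [Matrix.mul_zero, zero_add, add_zero] at this
      rw [Matrix.neg_mul, sub_neg_eq_add]
      exact this
end

section
/- Let E, A ∈ ℝ^{m×n}, C ∈ ℝ^{r×n}, K ∈ ℝ^{p×n}. There exist matrices N ∈ ℝ^{p×p}, T ∈ ℝ^{p×m}, L ∈ ℝ^{p×r}, M ∈ ℝ^{p×r} satisfying the two matrix equations T·A − L·C − N·(T·E) = 0 and T·E + M·C = K if and only if the rank of the block matrix with block rows [E A], [C 0], [0 C], [0 K], [K 0] equals the rank of the block matrix with block rows [E A], [C 0], [0 C], [0 K]. -/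
open Matrix Set Submodule

/-- Row `i` of `X * B` is `X i ᵥ* B`. -/
private lemma mul_row {a b n : Type*} [Fintype a]
    (X : Matrix b a ℝ) (B : Matrix a n ℝ) (i : b) :
    (X * B) i = X i ᵥ* B := by
  funext j
  simp [Matrix.mul_apply, Matrix.vecMul, dotProduct]

/-- Solvability of `X * B = D` is equivalent to a rank condition. -/
private lemma exists_mul_eq_iff_rank {a b n : Type*} [Fintype a] [Fintype b] [Fintype n]
    (B : Matrix a n ℝ) (D : Matrix b n ℝ) :
    (∃ X : Matrix b a ℝ, X * B = D) ↔ (Matrix.fromRows B D).rank = B.rank := by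
  have hspan : ∀ (v : n → ℝ), v ∈ Submodule.span ℝ (Set.range B) ↔
      ∃ w : a → ℝ, w ᵥ* B = v := by
    intro v
    rw [show Set.range B = Set.range B.row from rfl, ← range_vecMulLinear]
    simp [LinearMap.mem_range]
  have hrange : Set.range (Matrix.fromRows B D) = Set.range B ∪ Set.range D := by
    ext v
    constructor
    · rintro ⟨i, rfl⟩
      cases i with
      | inl i => exact Or.inl ⟨i, rfl⟩
      | inr i => exact Or.inr ⟨i, rfl⟩
    · rintro (⟨i, rfl⟩ | ⟨i, rfl⟩)
      · exact ⟨Sum.inl i, rfl⟩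
      · exact ⟨Sum.inr i, rfl⟩
  have hrk1 : (Matrix.fromRows B D).rank =
      Module.finrank ℝ ↥(Submodule.span ℝ (Set.range B) ⊔ Submodule.span ℝ (Set.range D)) := by
    rw [Matrix.rank_eq_finrank_span_row,
      show Set.range (Matrix.fromRows B D).row = Set.range (Matrix.fromRows B D) from rfl, hrange, Submodule.span_union]
  have hrk2 : B.rank = Module.finrank ℝ ↥(Submodule.span ℝ (Set.range B)) :=
    Matrix.rank_eq_finrank_span_row B
  constructor
  · rintro ⟨X, rfl⟩
    have hle : Submodule.span ℝ (Set.range (X * B)) ≤ Submodule.span ℝ (Set.range B) := by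
      rw [Submodule.span_le]
      rintro v ⟨i, rfl⟩
      exact SetLike.mem_coe.mpr ((hspan _).mpr ⟨X i, (mul_row X B i).symm⟩)
    rw [hrk1, hrk2, sup_eq_left.mpr hle]
  · intro h
    rw [hrk1, hrk2] at h
    have hle : Submodule.span ℝ (Set.range D) ≤ Submodule.span ℝ (Set.range B) := by
      have h1 : Submodule.span ℝ (Set.range B) ≤
          Submodule.span ℝ (Set.range B) ⊔ Submodule.span ℝ (Set.range D) := le_sup_left
      have heq := Submodule.eq_of_le_of_finrank_le h1 h.le
      rw [heq]
      exact le_sup_right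
    have hmem : ∀ i : b, ∃ w : a → ℝ, w ᵥ* B = D i := by
      intro i
      rw [← hspan]
      exact hle (Submodule.subset_span ⟨i, rfl⟩)
    choose w hw using hmem
    refine ⟨Matrix.of w, ?_⟩
    funext i j
    rw [← congrFun (hw i) j]
    exact congrFun (mul_row (Matrix.of w) B i) j

/-- The matrix equations `T·A − L·C − N·(T·E) = 0` and `T·E + M·C = K` are solvable
for `(N, T, L, M)` if and only if the rank of the block matrix with block rows
`[E A], [C 0], [0 C], [0 K], [K 0]` equals the rank of the block matrix with block
rows `[E A], [C 0], [0 C], [0 K]`. -/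
theorem filter_equations_solvable_iff_rank (m n r p : ℕ)
    (E A : Matrix (Fin m) (Fin n) ℝ) (C : Matrix (Fin r) (Fin n) ℝ)
    (K : Matrix (Fin p) (Fin n) ℝ) :
    (∃ (N : Matrix (Fin p) (Fin p) ℝ) (T : Matrix (Fin p) (Fin m) ℝ)
        (L : Matrix (Fin p) (Fin r) ℝ) (M : Matrix (Fin p) (Fin r) ℝ),
        T * A - L * C - N * (T * E) = 0 ∧ T * E + M * C = K) ↔
      (Matrix.fromRows
          (Matrix.fromRows
            (Matrix.fromRows
              (Matrix.fromRows (Matrix.fromCols E A) (Matrix.fromCols C 0))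
              (Matrix.fromCols 0 C))
            (Matrix.fromCols 0 K))
          (Matrix.fromCols K 0)).rank =
        (Matrix.fromRows
          (Matrix.fromRows
            (Matrix.fromRows (Matrix.fromCols E A) (Matrix.fromCols C 0))
            (Matrix.fromCols 0 C))
          (Matrix.fromCols 0 K)).rank := by
  rw [← exists_mul_eq_iff_rank]
  have hadd : ∀ (a b c d a' b' c' d' : Matrix (Fin p) (Fin n) ℝ),
      Matrix.fromCols a a' + Matrix.fromCols b b' + Matrix.fromCols c c'
        + Matrix.fromCols d d'
        = Matrix.fromCols (a + b + c + d) (a' + b' + c' + d') := by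
    intro a b c d a' b' c' d'
    funext i j
    cases j <;> simp [Matrix.fromCols]
  constructor
  · rintro ⟨N, T, L, M, h1, h2⟩
    refine ⟨Matrix.fromCols (Matrix.fromCols (Matrix.fromCols T M) (N * M - L)) (-N), ?_⟩
    rw [Matrix.fromCols_mul_fromRows, Matrix.fromCols_mul_fromRows,
      Matrix.fromCols_mul_fromRows, Matrix.mul_fromCols, Matrix.mul_fromCols,
      Matrix.mul_fromCols, Matrix.mul_fromCols, hadd, Matrix.fromCols_ext_iff]
    constructor
    · simp only [Matrix.mul_zero, add_zero]
      exact h2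
    · simp only [Matrix.mul_zero, add_zero]
      have hTE : T * E = K - M * C := by rw [← h2]; abel
      have h3 : T * A - L * C - N * (K - M * C) = 0 := by rw [← hTE]; exact h1
      rw [Matrix.sub_mul, Matrix.mul_assoc] at *
      rw [Matrix.mul_sub] at h3
      calc T * A + (N * (M * C) - L * C) + -N * K
          = T * A - L * C - (N * K - N * (M * C)) := by
            rw [Matrix.neg_mul]; abel
        _ = 0 := h3
  · rintro ⟨X, hX⟩
    set T := (X.toCols₁.toCols₁).toCols₁ with hT
    set M := (X.toCols₁.toCols₁).toCols₂ with hM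
    set L' := X.toCols₁.toCols₂ with hL'
    set N' := X.toCols₂ with hN'
    have hXeq : X = Matrix.fromCols (Matrix.fromCols (Matrix.fromCols T M) L') N' := by
      rw [hT, hM, hL', hN', Matrix.fromCols_toCols, Matrix.fromCols_toCols,
        Matrix.fromCols_toCols]
    rw [hXeq, Matrix.fromCols_mul_fromRows, Matrix.fromCols_mul_fromRows,
      Matrix.fromCols_mul_fromRows, Matrix.mul_fromCols, Matrix.mul_fromCols,
      Matrix.mul_fromCols, Matrix.mul_fromCols, hadd, Matrix.fromCols_ext_iff] at hX
    obtain ⟨hX1, hX2⟩ := hX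
    simp only [Matrix.mul_zero, add_zero] at hX1 hX2
    refine ⟨-N', T, -N' * M - L', M, ?_, hX1⟩
    have hTE : T * E = K - M * C := by rw [← hX1]; abel
    rw [hTE]
    calc T * A - (-N' * M - L') * C - -N' * (K - M * C)
        = T * A + L' * C + N' * K := by
          simp only [Matrix.sub_mul, Matrix.neg_mul, Matrix.mul_sub, Matrix.mul_assoc]
          abel
      _ = 0 := hX2
end

section
/- Let G ∈ ℝ^{r×q}, D ∈ ℝ^{m×q}, and let T₁ ∈ ℝ^{p×m}, M₁, P₁ ∈ ℝ^{p×r}, N₁ ∈ ℝ^{p×p}, T₂ ∈ ℝ^{s×m}, M₂, P₂ ∈ ℝ^{s×r}, N₂ ∈ ℝ^{s×p}, Z₁ ∈ ℝ^{p×s}. Set M̄₂ := M₂·G ∈ ℝ^{s×q} and let X ∈ ℝ^{q×s} satisfy M̄₂·X·M̄₂ = M̄₂. Define 𝒯₂ := (Iₛ − M̄₂·X)·T₂, ℳ₂ := (Iₛ − M̄₂·X)·M₂, 𝒫₂ := (Iₛ − M̄₂·X)·P₂, 𝒩₂ := (Iₛ − M̄₂·X)·N₂, and T := T₁ − Z₁·𝒯₂,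 M := M₁ − Z₁·ℳ₂, P := P₁ − Z₁·𝒫₂, N := N₁ − Z₁·𝒩₂, L := N·M − P, B₁ := T₁·D − N₁·M₁·G + P₁·G, B₂ := 𝒯₂·D − 𝒩₂·M₁·G + 𝒫₂·G. Then M·G = M₁·G and T·D − L·G = B₁ − Z₁·B₂. -/
/-- With the projected parametrization of the filter matrices via a generalized inverse
`X` of `M̄₂ = M₂ G` (so `M̄₂ X M̄₂ = M̄₂`), the disturbance-to-error matrices satisfy
`M G = M₁ G` and `T D − L G = B₁ − Z₁ B₂`. -/
theorem projected_parametrization_identities (r q m p s : ℕ)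
    (G : Matrix (Fin r) (Fin q) ℝ) (D : Matrix (Fin m) (Fin q) ℝ)
    (T₁ : Matrix (Fin p) (Fin m) ℝ) (M₁ P₁ : Matrix (Fin p) (Fin r) ℝ)
    (N₁ : Matrix (Fin p) (Fin p) ℝ)
    (T₂ : Matrix (Fin s) (Fin m) ℝ) (M₂ P₂ : Matrix (Fin s) (Fin r) ℝ)
    (N₂ : Matrix (Fin s) (Fin p) ℝ)
    (Z₁ : Matrix (Fin p) (Fin s) ℝ) (X : Matrix (Fin q) (Fin s) ℝ)
    (Mbar₂ : Matrix (Fin s) (Fin q) ℝ) (hMbar₂ : Mbar₂ = M₂ * G)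
    (hX : Mbar₂ * X * Mbar₂ = Mbar₂)
    (𝒯₂ : Matrix (Fin s) (Fin m) ℝ) (h𝒯₂ : 𝒯₂ = (1 - Mbar₂ * X) * T₂)
    (ℳ₂ : Matrix (Fin s) (Fin r) ℝ) (hℳ₂ : ℳ₂ = (1 - Mbar₂ * X) * M₂)
    (𝒫₂ : Matrix (Fin s) (Fin r) ℝ) (h𝒫₂ : 𝒫₂ = (1 - Mbar₂ * X) * P₂)
    (𝒩₂ : Matrix (Fin s) (Fin p) ℝ) (h𝒩₂ : 𝒩₂ = (1 - Mbar₂ * X) * N₂)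
    (T : Matrix (Fin p) (Fin m) ℝ) (hT : T = T₁ - Z₁ * 𝒯₂)
    (M : Matrix (Fin p) (Fin r) ℝ) (hM : M = M₁ - Z₁ * ℳ₂)
    (P : Matrix (Fin p) (Fin r) ℝ) (hP : P = P₁ - Z₁ * 𝒫₂)
    (N : Matrix (Fin p) (Fin p) ℝ) (hN : N = N₁ - Z₁ * 𝒩₂)
    (L : Matrix (Fin p) (Fin r) ℝ) (hL : L = N * M - P)
    (B₁ : Matrix (Fin p) (Fin q) ℝ) (hB₁ : B₁ = T₁ * D - N₁ * M₁ * G + P₁ * G)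
    (B₂ : Matrix (Fin s) (Fin q) ℝ) (hB₂ : B₂ = 𝒯₂ * D - 𝒩₂ * M₁ * G + 𝒫₂ * G) :
    M * G = M₁ * G ∧ T * D - L * G = B₁ - Z₁ * B₂ := by
  have key : ℳ₂ * G = 0 := by
    rw [hℳ₂, Matrix.sub_mul, Matrix.sub_mul, Matrix.one_mul, Matrix.mul_assoc (Mbar₂ * X) M₂ G,
      ← hMbar₂, hX, sub_self]
  have h1 : M * G = M₁ * G := by
    rw [hM, Matrix.sub_mul, Matrix.mul_assoc, key, Matrix.mul_zero, sub_zero]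
  refine ⟨h1, ?_⟩
  rw [hT, hL, hN, hP, hB₁, hB₂]
  simp only [Matrix.sub_mul, Matrix.add_mul, Matrix.mul_sub, Matrix.mul_add, Matrix.mul_assoc, h1]
  abel
end

section
/- Let Q ∈ ℝ^{p×p} be symmetric, N ∈ ℝ^{p×p}, S ∈ ℝ^{p×l}, ℬ ∈ ℝ^{p×q}, H ∈ ℝ^{l×p}, H̃ ∈ ℝ^{p×q}, and ρ, γ ∈ ℝ. Set ℋ := Hᵀ·H and let Π̃ be the symmetric (p+l+q)×(p+l+q) block matrix with blocks Π̃₁₁ = Nᵀ·Q + Q·N − ρ·ℋ + Iₚ, Π̃₁₂ = Q·S + Hᵀ, Π̃₁₃ = Q·ℬ + ρ·ℋ·H̃ − H̃, Π̃₂₂ = 0, Π̃₂₃ = −H·H̃, Π̃₃₃ = −ρ·H̃ᵀ·ℋ·H̃ + H̃ᵀ·H̃ − γ²·I_q, and Π̃ⱼᵢ = Π̃ᵢⱼᵀ. Then for all e₁ ∈ ℝᵖ, g ∈ ℝˡ, v ∈ ℝ^q satisfying the sector inequality 2·⟨H·(e₁ − H̃·v), g⟩ ≥ ρ·‖H·(e₁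 − H̃·v)‖², one has 2·⟨Q·e₁, N·e₁ + S·g + ℬ·v⟩ + ‖e₁ − H̃·v‖² − γ²·‖v‖² ≤ ζᵀ·Π̃·ζ, where ζ := (e₁, g, v) ∈ ℝ^{p+l+q}. In particular, if −Π̃ is positive semidefinite, then 2·⟨Q·e₁, N·e₁ + S·g + ℬ·v⟩ + ‖e₁ − H̃·v‖² − γ²·‖v‖² ≤ 0. -/
open Matrix

private lemma dot_transpose_mulVec {m n : ℕ} (A : Matrix (Fin m) (Fin n) ℝ)
    (x : Fin n → ℝ) (y : Fin m → ℝ) :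
    x ⬝ᵥ (Aᵀ *ᵥ y) = (A *ᵥ x) ⬝ᵥ y := by
  rw [dotProduct_mulVec, vecMul_transpose]

/-- Quadratic-form bound for the Lyapunov derivative: under the sector inequality,
the dissipation expression `2⟨Q e₁, N e₁ + S g + ℬ v⟩ + ‖e₁ − H̃ v‖² − γ²‖v‖²` is
bounded by the quadratic form of the LMI matrix `Π̃`; in particular it is nonpositive
whenever `−Π̃` is positive semidefinite. -/
theorem lyapunov_derivative_quadratic_bound (p l q : ℕ)
    (Q : Matrix (Fin p) (Fin p) ℝ) (hQ : Q.IsSymm)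
    (N : Matrix (Fin p) (Fin p) ℝ) (S : Matrix (Fin p) (Fin l) ℝ)
    (B : Matrix (Fin p) (Fin q) ℝ) (H : Matrix (Fin l) (Fin p) ℝ)
    (Htil : Matrix (Fin p) (Fin q) ℝ) (ρ γ : ℝ)
    (ℋ : Matrix (Fin p) (Fin p) ℝ) (hℋ : ℋ = Hᵀ * H)
    (Pi11 : Matrix (Fin p) (Fin p) ℝ) (hPi11 : Pi11 = Nᵀ * Q + Q * N - ρ • ℋ + 1)
    (Pi12 : Matrix (Fin p) (Fin l) ℝ) (hPi12 : Pi12 = Q * S + Hᵀ)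
    (Pi13 : Matrix (Fin p) (Fin q) ℝ) (hPi13 : Pi13 = Q * B + ρ • (ℋ * Htil) - Htil)
    (Pi23 : Matrix (Fin l) (Fin q) ℝ) (hPi23 : Pi23 = -(H * Htil))
    (Pi33 : Matrix (Fin q) (Fin q) ℝ)
    (hPi33 : Pi33 = -(ρ • (Htilᵀ * ℋ * Htil)) + Htilᵀ * Htil - γ ^ 2 • (1 : Matrix (Fin q) (Fin q) ℝ))
    (Pitil : Matrix (Fin p ⊕ (Fin l ⊕ Fin q)) (Fin p ⊕ (Fin l ⊕ Fin q)) ℝ)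
    (hPitil : Pitil =
      Matrix.fromBlocks Pi11 (Matrix.fromCols Pi12 Pi13)
        (Matrix.fromRows Pi12ᵀ Pi13ᵀ) (Matrix.fromBlocks 0 Pi23 Pi23ᵀ Pi33)) :
    ∀ (e₁ : Fin p → ℝ) (g : Fin l → ℝ) (v : Fin q → ℝ),
      2 * ((H *ᵥ (e₁ - Htil *ᵥ v)) ⬝ᵥ g) ≥
          ρ * ((H *ᵥ (e₁ - Htil *ᵥ v)) ⬝ᵥ (H *ᵥ (e₁ - Htil *ᵥ v))) →
        (2 * ((Q *ᵥ e₁) ⬝ᵥ (N *ᵥ e₁ + S *ᵥ g + B *ᵥ v))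
              + (e₁ - Htil *ᵥ v) ⬝ᵥ (e₁ - Htil *ᵥ v) - γ ^ 2 * (v ⬝ᵥ v) ≤
            Sum.elim e₁ (Sum.elim g v) ⬝ᵥ (Pitil *ᵥ Sum.elim e₁ (Sum.elim g v))) ∧
          ((-Pitil).PosSemidef →
            2 * ((Q *ᵥ e₁) ⬝ᵥ (N *ᵥ e₁ + S *ᵥ g + B *ᵥ v))
                + (e₁ - Htil *ᵥ v) ⬝ᵥ (e₁ - Htil *ᵥ v) - γ ^ 2 * (v ⬝ᵥ v) ≤ 0) := by
  intro e₁ g v hsec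
  have key : Sum.elim e₁ (Sum.elim g v) ⬝ᵥ (Pitil *ᵥ Sum.elim e₁ (Sum.elim g v)) =
      2 * ((Q *ᵥ e₁) ⬝ᵥ (N *ᵥ e₁ + S *ᵥ g + B *ᵥ v))
        + (e₁ - Htil *ᵥ v) ⬝ᵥ (e₁ - Htil *ᵥ v) - γ ^ 2 * (v ⬝ᵥ v)
        + (2 * ((H *ᵥ (e₁ - Htil *ᵥ v)) ⬝ᵥ g)
           - ρ * ((H *ᵥ (e₁ - Htil *ᵥ v)) ⬝ᵥ (H *ᵥ (e₁ - Htil *ᵥ v)))) := by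
    subst hℋ hPi11 hPi12 hPi13 hPi23 hPi33 hPitil
    simp only [fromBlocks_mulVec, fromCols_mulVec_sumElim, fromRows_mulVec,
      sumElim_dotProduct_sumElim, Sum.elim_comp_inl, Sum.elim_comp_inr,
      add_mulVec, sub_mulVec, smul_mulVec,
      ← mulVec_mulVec, neg_mulVec, one_mulVec, zero_mulVec, transpose_add, transpose_sub,
      transpose_neg, transpose_mul, transpose_transpose, transpose_smul, transpose_one,
      dotProduct_add, add_dotProduct, dotProduct_sub, sub_dotProduct, dotProduct_neg,
      neg_dotProduct, dotProduct_smul, smul_dotProduct, smul_eq_mul,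
      mulVec_sub, mulVec_add, mulVec_neg, mulVec_smul, zero_add, add_zero, dotProduct_zero,
      zero_dotProduct, dot_transpose_mulVec, hQ]
    have hQ' : ∀ (x y : Fin p → ℝ), (Q *ᵥ x) ⬝ᵥ y = x ⬝ᵥ (Q *ᵥ y) := by
      intro x y
      conv_rhs => rw [← hQ.eq]
      rw [dot_transpose_mulVec]
    simp only [dotProduct_comm]
    simp only [hQ', mulVec_mulVec]
    try simp only [← mulVec_mulVec]
    try simp only [dotProduct_comm]
    ring
  constructor
  · linarith
  · intro hpsd
    have h0 := hpsd.dotProduct_mulVec_nonneg (Sum.elim e₁ (Sum.elim g v))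
    simp only [neg_mulVec, dotProduct_neg, star_trivial] at h0
    linarith
end

section
/- Let Q ∈ ℝ^{p×p} be symmetric, N ∈ ℝ^{p×p}, S ∈ ℝ^{p×l}, H ∈ ℝ^{l×p}, and ρ ∈ ℝ. Let Ω be the symmetric (p+l)×(p+l) block matrix with blocks Ω₁₁ = Nᵀ·Q + Q·N − ρ·Hᵀ·H + Iₚ, Ω₁₂ = Q·S + Hᵀ, Ω₂₂ = 0, and Ω₂₁ = Ω₁₂ᵀ. Then for all e₁ ∈ ℝᵖ and g ∈ ℝˡ satisfying 2·⟨H·e₁, g⟩ ≥ ρ·‖H·e₁‖², one has 2·⟨Q·e₁, N·e₁ + S·g⟩ + ‖e₁‖² ≤ ηᵀ·Ω·η, where η := (e₁, g) ∈ ℝ^{p+l}. In particular, if −Ω is positive semidefinite, then 2·⟨Q·e₁, N·e₁ + S·g⟩ ≤ −‖e₁‖². -/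
open Matrix

/-- Disturbance-free quadratic-form bound: under the sector inequality, the Lyapunov
derivative expression `2⟨Q e₁, N e₁ + S g⟩ + ‖e₁‖²` is bounded by the quadratic form
of the LMI matrix `Ω`; in particular `2⟨Q e₁, N e₁ + S g⟩ ≤ −‖e₁‖²` whenever `−Ω` is
positive semidefinite. -/
theorem lyapunov_derivative_quadratic_bound_disturbance_free (p l : ℕ)
    (Q : Matrix (Fin p) (Fin p) ℝ) (hQ : Q.IsSymm)
    (N : Matrix (Fin p) (Fin p) ℝ) (S : Matrix (Fin p) (Fin l) ℝ)
    (H : Matrix (Fin l) (Fin p) ℝ) (ρ : ℝ)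
    (Ω₁₁ : Matrix (Fin p) (Fin p) ℝ) (hΩ₁₁ : Ω₁₁ = Nᵀ * Q + Q * N - ρ • (Hᵀ * H) + 1)
    (Ω₁₂ : Matrix (Fin p) (Fin l) ℝ) (hΩ₁₂ : Ω₁₂ = Q * S + Hᵀ)
    (Ω : Matrix (Fin p ⊕ Fin l) (Fin p ⊕ Fin l) ℝ)
    (hΩ : Ω = Matrix.fromBlocks Ω₁₁ Ω₁₂ Ω₁₂ᵀ 0) :
    ∀ (e₁ : Fin p → ℝ) (g : Fin l → ℝ),
      2 * ((H *ᵥ e₁) ⬝ᵥ g) ≥ ρ * ((H *ᵥ e₁) ⬝ᵥ (H *ᵥ e₁)) →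
        (2 * ((Q *ᵥ e₁) ⬝ᵥ (N *ᵥ e₁ + S *ᵥ g)) + e₁ ⬝ᵥ e₁ ≤
            Sum.elim e₁ g ⬝ᵥ (Ω *ᵥ Sum.elim e₁ g)) ∧
          ((-Ω).PosSemidef →
            2 * ((Q *ᵥ e₁) ⬝ᵥ (N *ᵥ e₁ + S *ᵥ g)) ≤ -(e₁ ⬝ᵥ e₁)) := by
  intro e₁ g hsec
  have hquad : Sum.elim e₁ g ⬝ᵥ (Ω *ᵥ Sum.elim e₁ g) =
      2 * ((Q *ᵥ e₁) ⬝ᵥ (N *ᵥ e₁)) + 2 * ((Q *ᵥ e₁) ⬝ᵥ (S *ᵥ g))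
        + (2 * ((H *ᵥ e₁) ⬝ᵥ g) - ρ * ((H *ᵥ e₁) ⬝ᵥ (H *ᵥ e₁))) + e₁ ⬝ᵥ e₁ := by
    subst hΩ hΩ₁₁ hΩ₁₂
    rw [fromBlocks_mulVec, sumElim_dotProduct_sumElim]
    have h1 : e₁ ⬝ᵥ ((Nᵀ * Q + Q * N - ρ • (Hᵀ * H) + 1) *ᵥ e₁
          + (Q * S + Hᵀ) *ᵥ g) =
        (Q *ᵥ e₁) ⬝ᵥ (N *ᵥ e₁) + (Q *ᵥ e₁) ⬝ᵥ (N *ᵥ e₁)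
          - ρ * ((H *ᵥ e₁) ⬝ᵥ (H *ᵥ e₁)) + e₁ ⬝ᵥ e₁
          + ((Q *ᵥ e₁) ⬝ᵥ (S *ᵥ g) + (H *ᵥ e₁) ⬝ᵥ g) := by
      have hNQ : e₁ ⬝ᵥ ((Nᵀ * Q) *ᵥ e₁) = (Q *ᵥ e₁) ⬝ᵥ (N *ᵥ e₁) := by
        rw [← mulVec_mulVec, dotProduct_mulVec, vecMul_transpose, dotProduct_comm]
      have hQN : e₁ ⬝ᵥ ((Q * N) *ᵥ e₁) = (Q *ᵥ e₁) ⬝ᵥ (N *ᵥ e₁) := by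
        rw [← mulVec_mulVec, dotProduct_mulVec, ← hQ.eq, vecMul_transpose, hQ.eq]
      have hHH : e₁ ⬝ᵥ ((Hᵀ * H) *ᵥ e₁) = (H *ᵥ e₁) ⬝ᵥ (H *ᵥ e₁) := by
        rw [← mulVec_mulVec, dotProduct_mulVec, vecMul_transpose]
      have hQS : e₁ ⬝ᵥ ((Q * S) *ᵥ g) = (Q *ᵥ e₁) ⬝ᵥ (S *ᵥ g) := by
        rw [← mulVec_mulVec, dotProduct_mulVec, ← hQ.eq, vecMul_transpose, hQ.eq]
      have hHt : e₁ ⬝ᵥ (Hᵀ *ᵥ g) = (H *ᵥ e₁) ⬝ᵥ g := by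
        rw [dotProduct_mulVec, vecMul_transpose]
      simp only [dotProduct_add, add_mulVec, sub_mulVec, smul_mulVec,
        one_mulVec, dotProduct_sub, dotProduct_smul, smul_eq_mul,
        hNQ, hQN, hHH, hQS, hHt]
    have h2 : g ⬝ᵥ ((Q * S + Hᵀ)ᵀ *ᵥ e₁ + (0 : Matrix (Fin l) (Fin l) ℝ) *ᵥ g) =
        (Q *ᵥ e₁) ⬝ᵥ (S *ᵥ g) + (H *ᵥ e₁) ⬝ᵥ g := by
      have : g ⬝ᵥ ((Q * S + Hᵀ)ᵀ *ᵥ e₁) = ((Q * S + Hᵀ) *ᵥ g) ⬝ᵥ e₁ := by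
        rw [dotProduct_mulVec, vecMul_transpose]
      rw [dotProduct_add, this]
      have hQS : ((Q * S) *ᵥ g) ⬝ᵥ e₁ = (Q *ᵥ e₁) ⬝ᵥ (S *ᵥ g) := by
        rw [← mulVec_mulVec, dotProduct_comm, dotProduct_mulVec, ← hQ.eq,
          vecMul_transpose, hQ.eq]
      have hHt : (Hᵀ *ᵥ g) ⬝ᵥ e₁ = (H *ᵥ e₁) ⬝ᵥ g := by
        rw [dotProduct_comm, dotProduct_mulVec, vecMul_transpose]
      simp [add_mulVec, add_dotProduct, hQS, hHt]
    simp only [Sum.elim_comp_inl, Sum.elim_comp_inr]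
    rw [h1, h2]; ring
  have hL : 2 * ((Q *ᵥ e₁) ⬝ᵥ (N *ᵥ e₁ + S *ᵥ g)) =
      2 * ((Q *ᵥ e₁) ⬝ᵥ (N *ᵥ e₁)) + 2 * ((Q *ᵥ e₁) ⬝ᵥ (S *ᵥ g)) := by
    rw [dotProduct_add]; ring
  constructor
  · rw [hquad, hL]; linarith
  · intro hpsd
    have h0 := hpsd.dotProduct_mulVec_nonneg (Sum.elim e₁ g)
    have hstar : star (Sum.elim e₁ g) = Sum.elim e₁ g := rfl
    rw [hstar] at h0
    have : Sum.elim e₁ g ⬝ᵥ ((-Ω) *ᵥ Sum.elim e₁ g) =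
        -(Sum.elim e₁ g ⬝ᵥ (Ω *ᵥ Sum.elim e₁ g)) := by
      simp [neg_mulVec]
    rw [this] at h0
    norm_num at h0
    rw [hL]
    rw [hquad] at h0
    linarith
end

section
/- Let Q be a symmetric positive-definite real p×p matrix and let x : ℝ → ℝᵖ be a differentiable function such that for every t ≥ 0 the function V(t) := ⟨x(t), Q·x(t)⟩ satisfies V′(t) ≤ −‖x(t)‖². Then x(t) → 0 as t → ∞. -/
open Matrix

private lemma lyap_lower (p : ℕ) (hp : 0 < p) (Q : Matrix (Fin p) (Fin p) ℝ)
    (hQ : Q.PosDef) :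
    ∃ m : ℝ, 0 < m ∧ ∀ v : Fin p → ℝ, m * (v ⬝ᵥ v) ≤ v ⬝ᵥ (Q *ᵥ v) := by
  set f : (Fin p → ℝ) → ℝ := fun v => v ⬝ᵥ (Q *ᵥ v) with hf
  have hfc : Continuous f := by
    simp only [hf, dotProduct, mulVec]
    fun_prop
  have hfc' : Continuous fun v : EuclideanSpace ℝ (Fin p) => f ((WithLp.equiv 2 _) v) :=
    hfc.comp (PiLp.continuous_ofLp 2 _)
  have hne : (Metric.sphere (0 : EuclideanSpace ℝ (Fin p)) 1).Nonempty := by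
    refine ⟨EuclideanSpace.single ⟨0, hp⟩ (1:ℝ), ?_⟩
    simp [EuclideanSpace.norm_single]
  obtain ⟨u, huS, humin⟩ := (isCompact_sphere (0 : EuclideanSpace ℝ (Fin p)) 1).exists_isMinOn
    hne hfc'.continuousOn
  have hsq : ∀ w : EuclideanSpace ℝ (Fin p),
      (WithLp.equiv 2 _ w) ⬝ᵥ (WithLp.equiv 2 _ w) = ‖w‖ ^ 2 := by
    intro w
    rw [EuclideanSpace.norm_eq, Real.sq_sqrt (by positivity)]
    simp [dotProduct, sq]
  have hu1 : ‖u‖ = 1 := by simpa using huS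
  have hune : (WithLp.equiv 2 _ u) ≠ (0 : Fin p → ℝ) := by
    intro h
    have : u = 0 := by
      apply (WithLp.equiv 2 _).injective
      simpa using h
    simp [this] at hu1
  have hm : 0 < f (WithLp.equiv 2 _ u) := by
    have := hQ.dotProduct_mulVec_pos hune
    simpa [hf] using this
  refine ⟨f (WithLp.equiv 2 _ u), hm, fun v => ?_⟩
  by_cases hv : v = 0
  · simp [hv, hf]
  set w : EuclideanSpace ℝ (Fin p) := (WithLp.equiv 2 _).symm v with hw
  have hwne : w ≠ 0 := by
    intro h
    apply hv
    have := congrArg (WithLp.equiv 2 _) h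
    simpa [hw] using this
  have hwn : 0 < ‖w‖ := norm_pos_iff.mpr hwne
  have hmem : ‖w‖⁻¹ • w ∈ Metric.sphere (0 : EuclideanSpace ℝ (Fin p)) 1 := by
    simp [norm_smul, abs_of_pos (inv_pos.mpr hwn), inv_mul_cancel₀ hwn.ne']
  have hle := humin hmem
  have heq : (WithLp.equiv 2 _) (‖w‖⁻¹ • w) = ‖w‖⁻¹ • v := by
    simp [hw]
  have hscal : f (‖w‖⁻¹ • v) = ‖w‖⁻¹ * (‖w‖⁻¹ * f v) := by
    simp [hf, smul_dotProduct, mulVec_smul, dotProduct_smul, smul_eq_mul, mul_assoc]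
  have hvv : v ⬝ᵥ v = ‖w‖ ^ 2 := by
    have := hsq w
    simpa [hw] using this
  have hle' : f (WithLp.equiv 2 _ u) ≤ ‖w‖⁻¹ * (‖w‖⁻¹ * f v) := by
    calc f (WithLp.equiv 2 _ u) ≤ f ((WithLp.equiv 2 _) (‖w‖⁻¹ • w)) := hle
    _ = ‖w‖⁻¹ * (‖w‖⁻¹ * f v) := by rw [heq, hscal]
  rw [hvv]
  calc f (WithLp.equiv 2 _ u) * ‖w‖ ^ 2 ≤ (‖w‖⁻¹ * (‖w‖⁻¹ * f v)) * ‖w‖ ^ 2 :=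
        mul_le_mul_of_nonneg_right hle' (by positivity)
  _ = (‖w‖⁻¹ * ‖w‖) * ((‖w‖⁻¹ * ‖w‖) * f v) := by ring
  _ = f v := by rw [inv_mul_cancel₀ hwn.ne']; ring

private lemma lyap_upper (p : ℕ) (Q : Matrix (Fin p) (Fin p) ℝ) (v : Fin p → ℝ) :
    v ⬝ᵥ (Q *ᵥ v) ≤ (∑ i, ∑ j, |Q i j|) * (v ⬝ᵥ v) := by
  have hs : ∀ k, v k * v k ≤ v ⬝ᵥ v := fun k =>
    Finset.single_le_sum (f := fun j => v j * v j)
      (fun j _ => mul_self_nonneg _) (Finset.mem_univ k)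
  have hvv : (0:ℝ) ≤ v ⬝ᵥ v := Finset.sum_nonneg fun j _ => mul_self_nonneg _
  calc v ⬝ᵥ (Q *ᵥ v) = ∑ i, ∑ j, v i * (Q i j * v j) := by
        simp [dotProduct, mulVec, Finset.mul_sum]
  _ ≤ ∑ i, ∑ j, |Q i j| * (v ⬝ᵥ v) := by
      refine Finset.sum_le_sum fun i _ => Finset.sum_le_sum fun j _ => ?_
      calc v i * (Q i j * v j) ≤ |v i * (Q i j * v j)| := le_abs_self _
      _ = |Q i j| * (|v i| * |v j|) := by rw [abs_mul, abs_mul]; ring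
      _ ≤ |Q i j| * (v ⬝ᵥ v) := by
          refine mul_le_mul_of_nonneg_left ?_ (abs_nonneg _)
          have h1 : (|v i| * |v j|)^2 ≤ (v ⬝ᵥ v)^2 := by
            have := mul_le_mul (hs i) (hs j) (mul_self_nonneg _) hvv
            calc (|v i| * |v j|)^2 = (v i * v i) * (v j * v j) := by
                  rw [mul_pow]; rw [sq_abs, sq_abs]; ring_nf
            _ ≤ (v ⬝ᵥ v)^2 := by rw [sq]; exact this
          exact (pow_le_pow_iff_left₀ (by positivity) hvv two_ne_zero).mp h1
  _ = (∑ i, ∑ j, |Q i j|) * (v ⬝ᵥ v) := by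
      rw [Finset.sum_mul]
      exact Finset.sum_congr rfl fun i _ => (Finset.sum_mul _ _ _).symm

private lemma lyap_gronwall (M : ℝ) (hM : 0 < M) (V : ℝ → ℝ) (hVd : Differentiable ℝ V)
    (h : ∀ t : ℝ, 0 ≤ t → deriv V t ≤ -(V t / M)) :
    ∀ t : ℝ, 0 ≤ t → V t ≤ V 0 * Real.exp (-(t / M)) := by
  set g : ℝ → ℝ := fun t => V t * Real.exp (t / M) with hg
  have hgd : Differentiable ℝ g :=
    hVd.mul ((Real.differentiable_exp.comp (differentiable_id.div_const M)))
  have hderiv : ∀ t, deriv g t = (deriv V t + V t / M) * Real.exp (t / M) := by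
    intro t
    have h1 : HasDerivAt V (deriv V t) t := (hVd t).hasDerivAt
    have h2 : HasDerivAt (fun s : ℝ => Real.exp (s / M)) (Real.exp (t / M) * (1 / M)) t := by
      have := (Real.hasDerivAt_exp (t / M)).comp t ((hasDerivAt_id t).div_const M)
      exact this
    rw [show deriv g t = _ from (h1.mul h2).deriv]
    field_simp
  have hanti : AntitoneOn g (Set.Ici (0:ℝ)) := by
    refine antitoneOn_of_deriv_nonpos (convex_Ici 0) hgd.continuous.continuousOn
      (fun t ht => (hgd t).differentiableWithinAt) ?_
    intro t ht
    rw [interior_Ici] at ht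
    rw [hderiv]
    have h3 : deriv V t + V t / M ≤ 0 := by
      have := h t ht.le
      linarith
    exact mul_nonpos_of_nonpos_of_nonneg h3 (Real.exp_pos _).le
  intro t ht
  have := hanti (Set.self_mem_Ici) ht ht
  simp only [hg, zero_div, Real.exp_zero, mul_one] at this
  have hpos : (0:ℝ) < Real.exp (t / M) := Real.exp_pos _
  rw [Real.exp_neg, ← div_eq_mul_inv, le_div_iff₀ hpos]
  exact this

/-- Lyapunov convergence: if `Q` is symmetric positive definite, `x` is differentiable,
and `V(t) = ⟨x(t), Q x(t)⟩` satisfies `V′(t) ≤ −‖x(t)‖²` for all `t ≥ 0`, then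
`x(t) → 0` as `t → ∞`. -/
theorem lyapunov_convergence (p : ℕ)
    (Q : Matrix (Fin p) (Fin p) ℝ) (hQ : Q.PosDef)
    (x : ℝ → Fin p → ℝ) (hx : Differentiable ℝ x)
    (hV : ∀ t : ℝ, 0 ≤ t →
      deriv (fun τ : ℝ => x τ ⬝ᵥ (Q *ᵥ x τ)) t ≤ -(x t ⬝ᵥ x t)) :
    Filter.Tendsto x Filter.atTop (nhds 0) := by
  rcases Nat.eq_zero_or_pos p with hp | hp
  · subst hp
    have hx0 : x = fun _ => 0 := funext fun t => Subsingleton.elim _ _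
    rw [hx0]
    exact tendsto_const_nhds
  obtain ⟨m, hm, hlow⟩ := lyap_lower p hp Q hQ
  set M : ℝ := (∑ i, ∑ j, |Q i j|) + 1 with hM
  have hMpos : 0 < M := by
    have : (0:ℝ) ≤ ∑ i, ∑ j, |Q i j| :=
      Finset.sum_nonneg fun i _ => Finset.sum_nonneg fun j _ => abs_nonneg _
    linarith
  set V : ℝ → ℝ := fun τ : ℝ => x τ ⬝ᵥ (Q *ᵥ x τ) with hVdef
  have hdotnn : ∀ t, (0:ℝ) ≤ x t ⬝ᵥ x t := fun t =>
    Finset.sum_nonneg fun j _ => mul_self_nonneg _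
  have hxi : ∀ i, Differentiable ℝ fun τ => x τ i := fun i =>
    (differentiable_pi.mp hx) i
  have hVd : Differentiable ℝ V := by
    simp only [hVdef, dotProduct, mulVec]
    fun_prop
  have hup : ∀ t, V t ≤ M * (x t ⬝ᵥ x t) := by
    intro t
    calc V t ≤ (∑ i, ∑ j, |Q i j|) * (x t ⬝ᵥ x t) := lyap_upper p Q (x t)
    _ ≤ M * (x t ⬝ᵥ x t) := by
        apply mul_le_mul_of_nonneg_right _ (hdotnn t)
        simp [hM]
  have hVderiv : ∀ t : ℝ, 0 ≤ t → deriv V t ≤ -(V t / M) := by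
    intro t ht
    have h1 := hV t ht
    have h2 : V t / M ≤ x t ⬝ᵥ x t := by
      rw [div_le_iff₀ hMpos]
      calc V t ≤ M * (x t ⬝ᵥ x t) := hup t
      _ = (x t ⬝ᵥ x t) * M := mul_comm _ _
    calc deriv V t ≤ -(x t ⬝ᵥ x t) := h1
    _ ≤ -(V t / M) := neg_le_neg h2
  have hVle := lyap_gronwall M hMpos V hVd hVderiv
  -- bound on the dot product
  have hbound : ∀ t : ℝ, 0 ≤ t → x t ⬝ᵥ x t ≤ (V 0 / m) * Real.exp (-(t / M)) := by
    intro t ht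
    have h1 : m * (x t ⬝ᵥ x t) ≤ V t := hlow (x t)
    have h2 := hVle t ht
    calc x t ⬝ᵥ x t ≤ V t / m := (le_div_iff₀' hm).mpr h1
    _ ≤ (V 0 * Real.exp (-(t / M))) / m := by gcongr
    _ = (V 0 / m) * Real.exp (-(t / M)) := by ring
  have hexp : Filter.Tendsto (fun t : ℝ => (V 0 / m) * Real.exp (-(t / M)))
      Filter.atTop (nhds 0) := by
    have he : Filter.Tendsto (fun t : ℝ => Real.exp (-(t / M))) Filter.atTop (nhds 0) := by
      refine Real.tendsto_exp_atBot.comp ?_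
      refine Filter.tendsto_neg_atBot_iff.mpr ?_
      exact Filter.Tendsto.atTop_div_const hMpos Filter.tendsto_id
    simpa using he.const_mul (V 0 / m)
  have hdot : Filter.Tendsto (fun t => x t ⬝ᵥ x t) Filter.atTop (nhds 0) := by
    refine squeeze_zero' (Filter.Eventually.of_forall fun t => hdotnn t) ?_ hexp
    filter_upwards [Filter.eventually_ge_atTop (0:ℝ)] with t ht
    exact hbound t ht
  rw [tendsto_pi_nhds]
  intro i
  have hsq : Filter.Tendsto (fun t => x t i * x t i) Filter.atTop (nhds 0) := by
    refine squeeze_zero' (Filter.Eventually.of_forall fun t => mul_self_nonneg _)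
      (Filter.Eventually.of_forall fun t => ?_) hdot
    exact Finset.single_le_sum (f := fun j => x t j * x t j)
      (fun j _ => mul_self_nonneg _) (Finset.mem_univ i)
  have habs : Filter.Tendsto (fun t => |x t i|) Filter.atTop (nhds 0) := by
    have hc := (Real.continuous_sqrt.tendsto 0).comp hsq
    simp only [Function.comp_def, Real.sqrt_zero] at hc
    simpa only [Real.sqrt_mul_self_eq_abs] using hc
  have : Filter.Tendsto (fun t => x t i) Filter.atTop (nhds 0) :=
    squeeze_zero_norm (fun t => le_of_eq (Real.norm_eq_abs _)) habs
  simpa using this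
end

section
/- Let Q ∈ ℝ^{p×p} be symmetric positive definite, N ∈ ℝ^{p×p}, S ∈ ℝ^{p×l}, ℬ ∈ ℝ^{p×q}, H ∈ ℝ^{l×p}, H̃ ∈ ℝ^{p×q}, ρ ∈ ℝ, γ > 0. Set ℋ := Hᵀ·H and let Π̃ be the symmetric (p+l+q)×(p+l+q) block matrix with blocks Π̃₁₁ = Nᵀ·Q + Q·N − ρ·ℋ + Iₚ, Π̃₁₂ = Q·S + Hᵀ, Π̃₁₃ = Q·ℬ + ρ·ℋ·H̃ − H̃, Π̃₂₂ = 0, Π̃₂₃ = −H·H̃, Π̃₃₃ = −ρ·H̃ᵀ·ℋ·H̃ + H̃ᵀ·H̃ − γ²·I_q, and Π̃ⱼᵢ = Π̃ᵢⱼᵀ, and assume −Π̃ is positive semidefinite. Let v : ℝ → ℝ^q and Δg : ℝ → ℝˡ be continuous, and let e₁ : ℝ → ℝᵖ be differentiable with ė₁(t) = N·e₁(t) + S·Δg(t) + ℬ·v(t) for all t ≥ 0. Define e(t) := e₁(t) − H̃·v(t) and assume the sector condition 2·⟨H·e(t), Δg(t)⟩ ≥ ρ·‖H·e(t)‖² for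 all t ≥ 0. Then for every t_f > 0, ∫₀^{t_f} ‖e(t)‖² dt ≤ ⟨e₁(0), Q·e₁(0)⟩ + γ²·∫₀^{t_f} ‖v(t)‖² dt. -/
open Matrix

lemma dp_flip {m n : Type*} [Fintype m] [Fintype n] (A : Matrix m n ℝ) (x : m → ℝ) (y : n → ℝ) :
    (x ᵥ* A) ⬝ᵥ y = (A *ᵥ y) ⬝ᵥ x := by
  rw [← Matrix.dotProduct_mulVec, dotProduct_comm]

lemma deriv_quad {n : ℕ} (M : Matrix (Fin n) (Fin n) ℝ) (x : ℝ → Fin n → ℝ) (x' : Fin n → ℝ) (t : ℝ)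
    (hx : HasDerivAt x x' t) :
    HasDerivAt (fun s => x s ⬝ᵥ (M *ᵥ x s)) (x' ⬝ᵥ (M *ᵥ x t) + x t ⬝ᵥ (M *ᵥ x')) t := by
  have hxi : ∀ i, HasDerivAt (fun s => x s i) (x' i) t := fun i => (hasDerivAt_pi.mp hx) i
  have hMx : ∀ i, HasDerivAt (fun s => ∑ j, M i j * x s j) (∑ j, M i j * x' j) t := by
    intro i
    exact HasDerivAt.fun_sum (fun j _ => (hxi j).const_mul (M i j))
  have key : HasDerivAt (fun s => ∑ i, x s i * ∑ j, M i j * x s j)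
      (∑ i, (x' i * ∑ j, M i j * x t j + x t i * ∑ j, M i j * x' j)) t :=
    HasDerivAt.fun_sum (fun i _ => (hxi i).mul (hMx i))
  have : (∑ i, (x' i * ∑ j, M i j * x t j + x t i * ∑ j, M i j * x' j))
      = x' ⬝ᵥ (M *ᵥ x t) + x t ⬝ᵥ (M *ᵥ x') := by
    simp [dotProduct, Matrix.mulVec, Finset.sum_add_distrib]
  rw [← this]
  exact key

lemma contOn_mulVec {n m : ℕ} (A : Matrix (Fin m) (Fin n) ℝ) {x : ℝ → Fin n → ℝ} {s : Set ℝ}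
    (hx : ContinuousOn x s) : ContinuousOn (fun t => A *ᵥ x t) s := by
  rw [continuousOn_pi]
  intro i
  simp only [Matrix.mulVec, dotProduct]
  exact continuousOn_finset_sum _ fun j _ => (continuousOn_const.mul ((continuousOn_pi.mp hx) j))

lemma contOn_dot {n : ℕ} {x y : ℝ → Fin n → ℝ} {s : Set ℝ}
    (hx : ContinuousOn x s) (hy : ContinuousOn y s) :
    ContinuousOn (fun t => x t ⬝ᵥ y t) s := by
  simp only [dotProduct]
  exact continuousOn_finset_sum _ fun j _ =>
    ((continuousOn_pi.mp hx) j).mul ((continuousOn_pi.mp hy) j)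

lemma quad_id (p l q : ℕ)
    (Q : Matrix (Fin p) (Fin p) ℝ) (hQs : Qᵀ = Q)
    (N : Matrix (Fin p) (Fin p) ℝ) (S : Matrix (Fin p) (Fin l) ℝ)
    (B : Matrix (Fin p) (Fin q) ℝ) (H : Matrix (Fin l) (Fin p) ℝ)
    (Htil : Matrix (Fin p) (Fin q) ℝ) (ρ γ : ℝ)
    (u1 : Fin p → ℝ) (u2 : Fin l → ℝ) (u3 : Fin q → ℝ) :
    (u1 ⊕ᵥ (u2 ⊕ᵥ u3)) ⬝ᵥ
      ((Matrix.fromBlocks (Nᵀ * Q + Q * N - ρ • (Hᵀ * H) + 1)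
        (Matrix.fromCols (Q * S + Hᵀ) (Q * B + ρ • ((Hᵀ * H) * Htil) - Htil))
        (Matrix.fromRows (Q * S + Hᵀ)ᵀ (Q * B + ρ • ((Hᵀ * H) * Htil) - Htil)ᵀ)
        (Matrix.fromBlocks 0 (-(H * Htil)) (-(H * Htil))ᵀ
          (-(ρ • (Htilᵀ * (Hᵀ * H) * Htil)) + Htilᵀ * Htil - γ ^ 2 • (1 : Matrix (Fin q) (Fin q) ℝ)))) *ᵥ
        (u1 ⊕ᵥ (u2 ⊕ᵥ u3))) =
      ((N *ᵥ u1 + S *ᵥ u2 + B *ᵥ u3) ⬝ᵥ (Q *ᵥ u1) + u1 ⬝ᵥ (Q *ᵥ (N *ᵥ u1 + S *ᵥ u2 + B *ᵥ u3)))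
        + (u1 - Htil *ᵥ u3) ⬝ᵥ (u1 - Htil *ᵥ u3) - γ ^ 2 * (u3 ⬝ᵥ u3)
        - (ρ * ((H *ᵥ (u1 - Htil *ᵥ u3)) ⬝ᵥ (H *ᵥ (u1 - Htil *ᵥ u3)))
            - 2 * ((H *ᵥ (u1 - Htil *ᵥ u3)) ⬝ᵥ u2)) := by
  simp only [Matrix.fromBlocks_mulVec, Matrix.fromCols_mulVec_sumElim, Matrix.fromRows_mulVec,
    Sum.elim_comp_inl, Sum.elim_comp_inr, sumElim_dotProduct_sumElim,
    Matrix.transpose_add, Matrix.transpose_sub, Matrix.transpose_mul, Matrix.transpose_smul,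
    Matrix.transpose_neg, Matrix.transpose_transpose, Matrix.transpose_one, hQs,
    Matrix.add_mulVec, Matrix.sub_mulVec, Matrix.neg_mulVec, Matrix.smul_mulVec,
    Matrix.one_mulVec, Matrix.mulVec_add, Matrix.mulVec_sub, Matrix.mulVec_neg,
    Matrix.mulVec_smul,
    dotProduct_add, add_dotProduct, dotProduct_sub, sub_dotProduct,
    dotProduct_neg, neg_dotProduct, dotProduct_smul, smul_dotProduct,
    smul_eq_mul, Matrix.dotProduct_mulVec, ← Matrix.vecMul_vecMul, Matrix.vecMul_transpose,
    Matrix.add_vecMul, Matrix.vecMul_add, Matrix.sub_vecMul, Matrix.vecMul_sub,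
    Matrix.smul_vecMul, Matrix.vecMul_one, Matrix.vecMul_neg, Matrix.neg_vecMul]
  have b1 : u2 ᵥ* H ⬝ᵥ u1 = H *ᵥ u1 ⬝ᵥ u2 := dp_flip H u2 u1
  have b2 : u2 ᵥ* H ᵥ* Htil ⬝ᵥ u3 = H *ᵥ (Htil *ᵥ u3) ⬝ᵥ u2 := by
    rw [dp_flip Htil (u2 ᵥ* H) u3, dotProduct_comm, ← Matrix.dotProduct_mulVec,
      dotProduct_comm]
  have b3 : u2 ᵥ* (0 : Matrix (Fin l) (Fin l) ℝ) ⬝ᵥ u2 = 0 := by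
    simp
  linear_combination b1 + b3 - b2

/-- H∞ performance of the error dynamics: if the LMI matrix `Π̃` satisfies `−Π̃ ⪰ 0`,
then along the error dynamics `ė₁ = N e₁ + S Δg + ℬ v` with output error
`e = e₁ − H̃ v` and sector-bounded nonlinearity mismatch `Δg`, one has for every
`t_f > 0` the ℒ₂-gain bound `∫₀^{t_f} ‖e‖² ≤ ⟨e₁(0), Q e₁(0)⟩ + γ² ∫₀^{t_f} ‖v‖²`. -/
theorem hinf_performance (p l q : ℕ)
    (Q : Matrix (Fin p) (Fin p) ℝ) (hQ : Q.PosDef)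
    (N : Matrix (Fin p) (Fin p) ℝ) (S : Matrix (Fin p) (Fin l) ℝ)
    (B : Matrix (Fin p) (Fin q) ℝ) (H : Matrix (Fin l) (Fin p) ℝ)
    (Htil : Matrix (Fin p) (Fin q) ℝ) (ρ γ : ℝ) (hγ : γ > 0)
    (ℋ : Matrix (Fin p) (Fin p) ℝ) (hℋ : ℋ = Hᵀ * H)
    (Pi11 : Matrix (Fin p) (Fin p) ℝ) (hPi11 : Pi11 = Nᵀ * Q + Q * N - ρ • ℋ + 1)
    (Pi12 : Matrix (Fin p) (Fin l) ℝ) (hPi12 : Pi12 = Q * S + Hᵀ)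
    (Pi13 : Matrix (Fin p) (Fin q) ℝ) (hPi13 : Pi13 = Q * B + ρ • (ℋ * Htil) - Htil)
    (Pi23 : Matrix (Fin l) (Fin q) ℝ) (hPi23 : Pi23 = -(H * Htil))
    (Pi33 : Matrix (Fin q) (Fin q) ℝ)
    (hPi33 : Pi33 = -(ρ • (Htilᵀ * ℋ * Htil)) + Htilᵀ * Htil
      - γ ^ 2 • (1 : Matrix (Fin q) (Fin q) ℝ))
    (Pitil : Matrix (Fin p ⊕ (Fin l ⊕ Fin q)) (Fin p ⊕ (Fin l ⊕ Fin q)) ℝ)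
    (hPitil : Pitil =
      Matrix.fromBlocks Pi11 (Matrix.fromCols Pi12 Pi13)
        (Matrix.fromRows Pi12ᵀ Pi13ᵀ) (Matrix.fromBlocks 0 Pi23 Pi23ᵀ Pi33))
    (hpsd : (-Pitil).PosSemidef)
    (v : ℝ → Fin q → ℝ) (hv : Continuous v)
    (Δg : ℝ → Fin l → ℝ) (hΔg : Continuous Δg)
    (e₁ : ℝ → Fin p → ℝ)
    (hdyn : ∀ t : ℝ, 0 ≤ t →
      HasDerivAt e₁ (N *ᵥ e₁ t + S *ᵥ Δg t + B *ᵥ v t) t)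
    (e : ℝ → Fin p → ℝ) (he : ∀ t : ℝ, e t = e₁ t - Htil *ᵥ v t)
    (hsector : ∀ t : ℝ, 0 ≤ t →
      2 * ((H *ᵥ e t) ⬝ᵥ Δg t) ≥ ρ * ((H *ᵥ e t) ⬝ᵥ (H *ᵥ e t))) :
    ∀ t_f : ℝ, t_f > 0 →
      ∫ t in (0 : ℝ)..t_f, e t ⬝ᵥ e t ≤
        e₁ 0 ⬝ᵥ (Q *ᵥ e₁ 0) + γ ^ 2 * ∫ t in (0 : ℝ)..t_f, v t ⬝ᵥ v t := by
  intro t_f htf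
  subst hℋ hPi11 hPi12 hPi13 hPi23 hPi33 hPitil
  have hQs : Qᵀ = Q := hQ.1
  -- derivative data
  set x' : ℝ → Fin p → ℝ := fun t => N *ᵥ e₁ t + S *ᵥ Δg t + B *ᵥ v t with hx'
  set dd : ℝ → ℝ := fun t => x' t ⬝ᵥ (Q *ᵥ e₁ t) + e₁ t ⬝ᵥ (Q *ᵥ x' t) with hdd
  have huIcc : Set.uIcc (0 : ℝ) t_f = Set.Icc 0 t_f := Set.uIcc_of_le htf.le
  have hVderiv : ∀ t ∈ Set.uIcc (0 : ℝ) t_f,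
      HasDerivAt (fun s => e₁ s ⬝ᵥ (Q *ᵥ e₁ s)) (dd t) t := by
    intro t ht
    rw [huIcc] at ht
    exact deriv_quad Q e₁ (x' t) t (hdyn t ht.1)
  -- continuity
  have he₁c : ContinuousOn e₁ (Set.Icc 0 t_f) := fun t ht =>
    ((hdyn t ht.1).continuousAt).continuousWithinAt
  have hx'c : ContinuousOn x' (Set.Icc 0 t_f) :=
    ((contOn_mulVec N he₁c).add (contOn_mulVec S hΔg.continuousOn)).add
      (contOn_mulVec B hv.continuousOn)
  have hddc : ContinuousOn dd (Set.Icc 0 t_f) :=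
    (contOn_dot hx'c (contOn_mulVec Q he₁c)).add (contOn_dot he₁c (contOn_mulVec Q hx'c))
  have hec : ContinuousOn e (Set.Icc 0 t_f) := by
    have : ContinuousOn (fun t => e₁ t - Htil *ᵥ v t) (Set.Icc 0 t_f) :=
      he₁c.sub (contOn_mulVec Htil hv.continuousOn)
    exact ContinuousOn.congr this (fun t _ => he t)
  have hee_int : IntervalIntegrable (fun t => e t ⬝ᵥ e t) MeasureTheory.volume 0 t_f := by
    apply ContinuousOn.intervalIntegrable
    rw [huIcc]
    exact contOn_dot hec hec
  have hvv_int : IntervalIntegrable (fun t => v t ⬝ᵥ v t) MeasureTheory.volume 0 t_f :=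
    (contOn_dot hv.continuousOn hv.continuousOn).intervalIntegrable
  have hdd_int : IntervalIntegrable dd MeasureTheory.volume 0 t_f := by
    apply ContinuousOn.intervalIntegrable
    rw [huIcc]; exact hddc
  -- FTC
  have hFTC : ∫ t in (0:ℝ)..t_f, dd t
      = e₁ t_f ⬝ᵥ (Q *ᵥ e₁ t_f) - e₁ 0 ⬝ᵥ (Q *ᵥ e₁ 0) :=
    intervalIntegral.integral_eq_sub_of_hasDerivAt hVderiv hdd_int
  -- pointwise inequality  dd t ≤ -(e⬝e) + γ² (v⬝v)
  have hpt : ∀ t ∈ Set.Icc (0:ℝ) t_f, dd t ≤ -(e t ⬝ᵥ e t) + γ ^ 2 * (v t ⬝ᵥ v t) := by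
    intro t ht
    have hid := quad_id p l q Q hQs N S B H Htil ρ γ (e₁ t) (Δg t) (v t)
    have hneg : (e₁ t ⊕ᵥ (Δg t ⊕ᵥ v t)) ⬝ᵥ
        ((Matrix.fromBlocks (Nᵀ * Q + Q * N - ρ • (Hᵀ * H) + 1)
          (Matrix.fromCols (Q * S + Hᵀ) (Q * B + ρ • ((Hᵀ * H) * Htil) - Htil))
          (Matrix.fromRows (Q * S + Hᵀ)ᵀ (Q * B + ρ • ((Hᵀ * H) * Htil) - Htil)ᵀ)
          (Matrix.fromBlocks 0 (-(H * Htil)) (-(H * Htil))ᵀ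
            (-(ρ • (Htilᵀ * (Hᵀ * H) * Htil)) + Htilᵀ * Htil
              - γ ^ 2 • (1 : Matrix (Fin q) (Fin q) ℝ)))) *ᵥ
          (e₁ t ⊕ᵥ (Δg t ⊕ᵥ v t))) ≤ 0 := by
      have h0 := hpsd.dotProduct_mulVec_nonneg (e₁ t ⊕ᵥ (Δg t ⊕ᵥ v t))
      simp only [Matrix.neg_mulVec, dotProduct_neg, star_trivial] at h0
      linarith
    have hsec := hsector t ht.1
    rw [he t] at hsec
    rw [hid] at hneg
    rw [he t]
    simp only [hdd, hx']
    linarith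
  -- combine
  have hmono : ∫ t in (0:ℝ)..t_f, dd t
      ≤ ∫ t in (0:ℝ)..t_f, (-(e t ⬝ᵥ e t) + γ ^ 2 * (v t ⬝ᵥ v t)) := by
    apply intervalIntegral.integral_mono_on htf.le hdd_int
    · exact hee_int.neg.add (hvv_int.const_mul _)
    · exact hpt
  have hsplit : ∫ t in (0:ℝ)..t_f, (-(e t ⬝ᵥ e t) + γ ^ 2 * (v t ⬝ᵥ v t))
      = -(∫ t in (0:ℝ)..t_f, e t ⬝ᵥ e t) + γ ^ 2 * ∫ t in (0:ℝ)..t_f, v t ⬝ᵥ v t := by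
    have h1 := intervalIntegral.integral_add hee_int.neg (hvv_int.const_mul (γ ^ 2))
    simpa [intervalIntegral.integral_neg, intervalIntegral.integral_const_mul] using h1
  have hVtf : 0 ≤ e₁ t_f ⬝ᵥ (Q *ᵥ e₁ t_f) := by
    have := hQ.posSemidef.dotProduct_mulVec_nonneg (e₁ t_f)
    simpa using this
  rw [hsplit] at hmono
  linarith [hFTC, hmono, hVtf]
end
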